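/- arXiv:1609.09696 — 4 statements merged into one kernel-verified Lean document; each statement's English description precedes it below -/
import Mathlib

section
/- Let κ > 0, μ > 0, m > 0 and h̄ > 0 be real parameters, and set θ₁ = h̄/(μ(1+κ)) and θ₂ = (μκ+m)h̄/(μ(1+κ)m). For every s ≥ 0, the Laplace transform of the κ-μ shadowed density satisfies ∫₀^∞ e^{−s x} f(x) dx = (1 + θ₁ s)^{m−μ} (1 + θ₂ s)^{−m}. -/
open Real MeasureTheory Set Filter Topology

/-- Pochhammer symbol `(a)_n = Γ(a+n)/Γ(a)`. -/
noncomputable def poch (a : ℝ) : ℕ → ℝ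
  | 0 => 1
  | n + 1 => poch a n * (a + n)

/-- Confluent hypergeometric function `₁F₁(a; b; x) = Σ ((a)_n/(b)_n) xⁿ/n!`. -/
noncomputable def hyp1F1 (a b x : ℝ) : ℝ :=
  ∑' n : ℕ, (poch a n / poch b n) * x ^ n / n.factorial

/-- The κ-μ shadowed probability density on `(0, ∞)`, with
`θ₁ = h̄/(μ(1+κ))` and `θ₂ = (μκ+m)h̄/(μ(1+κ)m)`:
`f(x) = (θ₁^(m−μ)/(θ₂^m Γ(μ))) x^(μ−1) e^(−x/θ₁) ₁F₁(m; μ; ((θ₂−θ₁)/(θ₁θ₂)) x)`. -/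
noncomputable def kmuPDF (κ μ m hbar x : ℝ) : ℝ :=
  (hbar / (μ * (1 + κ))) ^ (m - μ) /
      (((μ * κ + m) * hbar / (μ * (1 + κ) * m)) ^ m * Real.Gamma μ) *
    x ^ (μ - 1) * Real.exp (-x / (hbar / (μ * (1 + κ)))) *
    hyp1F1 m μ
      (((((μ * κ + m) * hbar / (μ * (1 + κ) * m)) - hbar / (μ * (1 + κ))) /
        ((hbar / (μ * (1 + κ))) * ((μ * κ + m) * hbar / (μ * (1 + κ) * m)))) * x)

lemma poch_pos {a : ℝ} (ha : 0 < a) (n : ℕ) : 0 < poch a n := by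
  induction n with
  | zero => simp [poch]
  | succ n ih => exact mul_pos ih (add_pos_of_pos_of_nonneg ha (Nat.cast_nonneg n))

lemma Gamma_poch {a : ℝ} (ha : 0 < a) (n : ℕ) :
    Real.Gamma (a + n) = Real.Gamma a * poch a n := by
  induction n with
  | zero => simp [poch]
  | succ n ih =>
    have h : a + ((n : ℕ) + 1 : ℕ) = (a + n) + 1 := by push_cast; ring
    have hpos : 0 < a + (n : ℝ) := add_pos_of_pos_of_nonneg ha (Nat.cast_nonneg n)
    rw [h, Real.Gamma_add_one hpos.ne', ih, poch]
    ring

lemma summable_poch {m : ℝ} (hm : 0 < m) {x : ℝ} (hx0 : 0 ≤ x) (hx1 : x < 1) :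
    Summable (fun n : ℕ => poch m n * x ^ n / n.factorial) := by
  rcases eq_or_lt_of_le hx0 with h | hx0'
  · apply summable_of_ne_finset_zero (s := {0})
    intro n hn
    have hn0 : n ≠ 0 := by simpa using hn
    simp [← h, zero_pow hn0]
  · apply summable_of_ratio_test_tendsto_lt_one hx1
    · filter_upwards with n
      exact (div_pos (mul_pos (poch_pos hm n) (pow_pos hx0' n))
        (Nat.cast_pos.mpr n.factorial_pos)).ne'
    · have key : ∀ n : ℕ,
          ‖poch m (n+1) * x ^ (n+1) / (n+1).factorial‖ / ‖poch m n * x ^ n / n.factorial‖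
            = ((m - 1) / ((n : ℝ) + 1) + 1) * x := by
        intro n
        have h1 : (0:ℝ) < poch m n := poch_pos hm n
        have h1' : (0:ℝ) < poch m (n+1) := poch_pos hm (n+1)
        have h2 : (0:ℝ) < x ^ n := pow_pos hx0' n
        have hf : ((n.factorial : ℝ)) ≠ 0 := Nat.cast_ne_zero.mpr n.factorial_ne_zero
        have hn1 : ((n:ℝ) + 1) ≠ 0 := by positivity
        rw [Real.norm_of_nonneg (by positivity), Real.norm_of_nonneg (by positivity)]
        have hfs : (((n+1).factorial : ℝ)) = ((n:ℝ) + 1) * n.factorial := by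
          push_cast [Nat.factorial_succ]; ring
        have hps : poch m (n+1) = poch m n * (m + n) := rfl
        rw [hps, hfs, pow_succ]
        field_simp
        ring
      simp only [key]
      have h0 : Tendsto (fun n : ℕ => (m - 1) / ((n:ℝ) + 1)) atTop (𝓝 0) := by
        have := (tendsto_const_div_atTop_nhds_zero_nat (m-1)).comp (tendsto_add_atTop_nat 1)
        refine this.congr fun n => ?_
        simp only [Function.comp]
        push_cast
        ring_nf
      have h1 := (h0.add (tendsto_const_nhds (x := (1:ℝ)))).mul_const x
      simpa using h1

lemma integrableOn_gamma' {a r : ℝ} (ha : 0 < a) (hr : 0 < r) :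
    IntegrableOn (fun t : ℝ => t ^ (a - 1) * Real.exp (-(r * t))) (Ioi 0) := by
  have h := integrableOn_rpow_mul_exp_neg_mul_rpow (p := 1) (s := a - 1) (b := r)
    (by linarith) one_pos hr
  refine h.congr_fun (fun t ht => ?_) measurableSet_Ioi
  beta_reduce
  rw [Real.rpow_one, neg_mul]

lemma exp_tsum' (y : ℝ) : ∑' n : ℕ, y ^ n / (n.factorial : ℝ) = Real.exp y := by
  rw [Real.exp_eq_exp_ℝ, NormedSpace.exp_eq_tsum_div]

lemma tsum_poch_eq {m x : ℝ} (hm : 0 < m) (hx0 : 0 ≤ x) (hx1 : x < 1) :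
    ∑' n : ℕ, poch m n * x ^ n / n.factorial = (1 - x) ^ (-m) := by
  have h1x : 0 < 1 - x := by linarith
  have hΓ : 0 < Real.Gamma m := Real.Gamma_pos_of_pos hm
  set F : ℕ → ℝ → ℝ := fun n t => t ^ (m - 1) * Real.exp (-t) * (x * t) ^ n / n.factorial
    with hF
  have heq : ∀ n : ℕ, EqOn
      (fun t : ℝ => (x ^ n / n.factorial) * (t ^ (m + n - 1) * Real.exp (-(1 * t))))
      (F n) (Ioi 0) := by
    intro n t ht
    have ht0 : (0:ℝ) < t := ht
    simp only [hF]
    rw [show m + (n:ℝ) - 1 = (m - 1) + (n:ℝ) by ring, Real.rpow_add ht0, Real.rpow_natCast,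
      mul_pow, one_mul]
    ring
  have hposmn : ∀ n : ℕ, (0:ℝ) < m + n :=
    fun n => add_pos_of_pos_of_nonneg hm (Nat.cast_nonneg n)
  have hInt : ∀ n, IntegrableOn (F n) (Ioi 0) := by
    intro n
    have base : IntegrableOn
        (fun t : ℝ => (x ^ n / n.factorial) * (t ^ (m + n - 1) * Real.exp (-(1 * t))))
        (Ioi 0) := (integrableOn_gamma' (hposmn n) one_pos).const_mul _
    exact base.congr_fun (heq n) measurableSet_Ioi
  have hval : ∀ n : ℕ, ∫ t in Ioi 0, F n t = Real.Gamma m * (poch m n * x ^ n / n.factorial) := by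
    intro n
    rw [← setIntegral_congr_fun measurableSet_Ioi (heq n), integral_const_mul,
      integral_rpow_mul_exp_neg_mul_Ioi (hposmn n) one_pos, Gamma_poch hm n]
    norm_num
    ring
  have hsum : Summable fun n : ℕ => ∫ t in Ioi 0, ‖F n t‖ := by
    have hnorm : ∀ n : ℕ, ∫ t in Ioi 0, ‖F n t‖ = ∫ t in Ioi 0, F n t := by
      intro n
      refine setIntegral_congr_fun measurableSet_Ioi (fun t ht => ?_)
      have ht0 : (0:ℝ) < t := ht
      exact Real.norm_of_nonneg (by positivity)
    simp only [hnorm, hval]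
    exact ((summable_poch hm hx0 hx1).mul_left _)
  have hswap := MeasureTheory.integral_tsum_of_summable_integral_norm hInt hsum
  have hptw : EqOn (fun t : ℝ => ∑' n, F n t)
      (fun t : ℝ => t ^ (m - 1) * Real.exp (-((1 - x) * t))) (Ioi 0) := by
    intro t ht
    have ht0 : (0:ℝ) < t := ht
    have h1 : ∑' n, F n t = (t ^ (m - 1) * Real.exp (-t)) * ∑' n : ℕ, (x * t) ^ n / n.factorial := by
      rw [← tsum_mul_left]
      exact tsum_congr fun n => by simp only [hF]; ring
    simp only [h1, exp_tsum']
    rw [mul_assoc, ← Real.exp_add]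
    congr 2
    ring
  have hfinal : ∑' n : ℕ, Real.Gamma m * (poch m n * x ^ n / n.factorial)
      = (1 / (1 - x)) ^ m * Real.Gamma m := by
    rw [← integral_rpow_mul_exp_neg_mul_Ioi hm h1x, ← setIntegral_congr_fun measurableSet_Ioi hptw,
      ← hswap]
    exact tsum_congr fun n => (hval n).symm
  rw [tsum_mul_left] at hfinal
  have hS := mul_left_cancel₀ hΓ.ne' (hfinal.trans (mul_comm _ _))
  rw [hS, one_div, Real.inv_rpow h1x.le, ← Real.rpow_neg h1x.le]

/-- The Laplace transform of the κ-μ shadowed density: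
`∫₀^∞ e^(−sx) f(x) dx = (1 + θ₁ s)^(m−μ) (1 + θ₂ s)^(−m)` for `s ≥ 0`. -/
theorem kmu_laplace (κ μ m hbar : ℝ) (hκ : 0 < κ) (hμ : 0 < μ) (hm : 0 < m)
    (hhbar : 0 < hbar) (θ1 θ2 : ℝ) (hθ1 : θ1 = hbar / (μ * (1 + κ)))
    (hθ2 : θ2 = (μ * κ + m) * hbar / (μ * (1 + κ) * m)) (s : ℝ) (hs : 0 ≤ s) :
    (∫ x in Set.Ioi (0 : ℝ), Real.exp (-(s * x)) * kmuPDF κ μ m hbar x)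
      = (1 + θ1 * s) ^ (m - μ) * (1 + θ2 * s) ^ (-m) := by
  have hθ1p : 0 < θ1 := by rw [hθ1]; positivity
  have hθ2p : 0 < θ2 := by rw [hθ2]; positivity
  have hΓμ : 0 < Real.Gamma μ := Real.Gamma_pos_of_pos hμ
  have hsub : θ2 - θ1 = κ * hbar / ((1 + κ) * m) := by
    rw [hθ1, hθ2]; field_simp; ring
  have hsubpos : 0 < θ2 - θ1 := by rw [hsub]; positivity
  set lam : ℝ := (θ2 - θ1) / (θ1 * θ2) with hlam_def
  have hlamp : 0 < lam := div_pos hsubpos (mul_pos hθ1p hθ2p)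
  set p : ℝ := s + 1 / θ1 with hp_def
  have hpp : 0 < p := by rw [hp_def]; positivity
  have hlam_lt : lam < p := by
    have h2 : lam = 1 / θ1 - 1 / θ2 := by rw [hlam_def]; field_simp
    have h3 : 0 < 1 / θ2 := by positivity
    rw [h2, hp_def]; linarith
  set X : ℝ := lam / p with hX_def
  have hX0 : 0 ≤ X := le_of_lt (div_pos hlamp hpp)
  have hX1 : X < 1 := (div_lt_one hpp).mpr hlam_lt
  set C : ℝ := θ1 ^ (m - μ) / (θ2 ^ m * Real.Gamma μ) with hC_def
  have hCp : 0 < C := div_pos (Real.rpow_pos_of_pos hθ1p _)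
    (mul_pos (Real.rpow_pos_of_pos hθ2p _) hΓμ)
  set c : ℕ → ℝ := fun n => C * (poch m n / poch μ n) * lam ^ n / n.factorial with hc_def
  have hcp : ∀ n, 0 < c n := by
    intro n
    have h1 := poch_pos hm n
    have h2 := poch_pos hμ n
    simp only [hc_def]
    positivity
  set F : ℕ → ℝ → ℝ := fun n t => c n * (t ^ (μ + n - 1) * Real.exp (-(p * t))) with hF_def
  clear_value lam p X C c F
  have hposμn : ∀ n : ℕ, (0:ℝ) < μ + n := fun n => add_pos_of_pos_of_nonneg hμ (Nat.cast_nonneg n)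
  have hInt : ∀ n, IntegrableOn (F n) (Ioi 0) := by
    intro n
    rw [hF_def]
    exact (integrableOn_gamma' (hposμn n) hpp).const_mul _
  have hval : ∀ n, ∫ t in Ioi 0, F n t = c n * ((1/p) ^ (μ + (n:ℝ)) * Real.Gamma (μ + n)) := by
    intro n
    simp only [hF_def]
    rw [integral_const_mul, integral_rpow_mul_exp_neg_mul_Ioi (hposμn n) hpp]
  have hA : ∀ n : ℕ, c n * ((1/p) ^ (μ + (n:ℝ)) * Real.Gamma (μ + n))
      = (C * Real.Gamma μ * (1/p) ^ μ) * (poch m n * X ^ n / n.factorial) := by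
    intro n
    have e1 : ((1:ℝ)/p) ^ (μ + (n:ℝ)) = (1/p) ^ μ * (1/p) ^ (n:ℕ) := by
      rw [Real.rpow_add (by positivity), Real.rpow_natCast]
    have hpμn := (poch_pos hμ n).ne'
    have hfn : ((n.factorial : ℝ)) ≠ 0 := Nat.cast_ne_zero.mpr n.factorial_ne_zero
    simp only [hc_def, hX_def]
    rw [e1, Gamma_poch hμ n, div_pow]
    field_simp
    have hpn : p ^ n * p⁻¹ ^ n = 1 := by rw [← mul_pow, mul_inv_cancel₀ hpp.ne', one_pow]
    linear_combination (-(poch m n * lam ^ n)) * hpn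
  have hsum : Summable fun n : ℕ => ∫ t in Ioi 0, ‖F n t‖ := by
    have hnorm : ∀ n : ℕ, ∫ t in Ioi 0, ‖F n t‖ = ∫ t in Ioi 0, F n t := by
      intro n
      refine setIntegral_congr_fun measurableSet_Ioi (fun t ht => ?_)
      have ht0 : (0:ℝ) < t := ht
      have := hcp n
      rw [hF_def]
      exact Real.norm_of_nonneg (by positivity)
    have heqv : (fun n : ℕ => ∫ t in Ioi 0, ‖F n t‖)
        = fun n : ℕ => (C * Real.Gamma μ * (1/p) ^ μ) * (poch m n * X ^ n / n.factorial) :=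
      funext fun n => by rw [hnorm n, hval n, hA n]
    rw [heqv]
    exact (summable_poch hm hX0 hX1).mul_left _
  have hpt : EqOn (fun t : ℝ => Real.exp (-(s * t)) * kmuPDF κ μ m hbar t)
      (fun t : ℝ => ∑' n, F n t) (Ioi 0) := by
    intro t ht
    have ht0 : (0:ℝ) < t := ht
    simp only [kmuPDF, hyp1F1]
    rw [← hθ1, ← hθ2, ← hlam_def, ← hC_def]
    have hterm : ∀ n : ℕ, F n t =
        (Real.exp (-(s*t)) * (C * t ^ (μ - 1) * Real.exp (-t / θ1))) *
          ((poch m n / poch μ n) * (lam * t) ^ n / n.factorial) := by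
      intro n
      simp only [hF_def, hc_def]
      rw [show μ + (n:ℝ) - 1 = (μ - 1) + (n:ℝ) by ring, Real.rpow_add ht0, Real.rpow_natCast,
        mul_pow, show -(p*t) = -(s*t) + (-t / θ1) by rw [hp_def]; field_simp; ring,
        Real.exp_add]
      ring
    rw [tsum_congr hterm, tsum_mul_left]
    ring
  calc ∫ x in Ioi (0:ℝ), Real.exp (-(s * x)) * kmuPDF κ μ m hbar x
      = ∫ x in Ioi (0:ℝ), ∑' n, F n x := setIntegral_congr_fun measurableSet_Ioi hpt
    _ = ∑' n, ∫ x in Ioi (0:ℝ), F n x :=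
        (MeasureTheory.integral_tsum_of_summable_integral_norm hInt hsum).symm
    _ = ∑' n : ℕ, (C * Real.Gamma μ * (1/p) ^ μ) * (poch m n * X ^ n / n.factorial) :=
        tsum_congr fun n => (hval n).trans (hA n)
    _ = (C * Real.Gamma μ * (1/p) ^ μ) * (1 - X) ^ (-m) := by
        rw [tsum_mul_left, tsum_poch_eq hm hX0 hX1]
    _ = (1 + θ1 * s) ^ (m - μ) * (1 + θ2 * s) ^ (-m) := by
        have hplam : 0 < p - lam := sub_pos.mpr hlam_lt
        have h1p : 1 + θ1 * s = θ1 * p := by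
          rw [hp_def]; field_simp; ring
        have h2p : 1 + θ2 * s = θ2 * (p - lam) := by
          rw [hp_def, hlam_def]; field_simp; ring
        have hXeq : 1 - X = (p - lam) / p := by
          rw [hX_def]; field_simp
        rw [h1p, h2p, Real.mul_rpow hθ1p.le hpp.le, Real.mul_rpow hθ2p.le hplam.le,
          Real.rpow_sub hpp, Real.rpow_neg hθ2p.le, Real.rpow_neg hplam.le, hXeq,
          Real.rpow_neg (div_nonneg hplam.le hpp.le), Real.div_rpow hplam.le hpp.le,
          hC_def, one_div, Real.inv_rpow hpp.le]
        have n1 : p ^ μ ≠ 0 := (Real.rpow_pos_of_pos hpp μ).ne'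
        have n2 : p ^ m ≠ 0 := (Real.rpow_pos_of_pos hpp m).ne'
        have n3 : (p - lam) ^ m ≠ 0 := (Real.rpow_pos_of_pos hplam m).ne'
        have n4 : θ2 ^ m ≠ 0 := (Real.rpow_pos_of_pos hθ2p m).ne'
        field_simp
end

section
/- (Exclusion-zone interference integral, Appendix III.) Let ν be a probability measure on [0,∞), let α > 2, set δ = 2/α, and assume ∫ h^δ dν(h) < ∞. Then for every R > 0 and s > 0, with z = s R^{−α}, ∫_R^∞ (1 − ∫ e^{−s h l^{−α}} dν(h)) · l dl = (R²/2) · ( ∫ (z h)^δ γ(1−δ, z h) dν(h) − (1 − ∫ e^{−z h} dν(h)) ). -/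
open Real MeasureTheory Set Filter
open scoped ENNReal NNReal
set_option maxRecDepth 8000

noncomputable def lowerGamma (s x : ℝ) : ℝ :=
  ∫ t in Set.Ioc (0 : ℝ) x, t ^ (s - 1) * Real.exp (-t)

lemma exp_Ioc_integral {u : ℝ} (hu : 0 ≤ u) :
    ∫ t in Set.Ioc (0:ℝ) u, Real.exp (-t) = 1 - Real.exp (-u) := by
  rw [← intervalIntegral.integral_of_le hu, intervalIntegral.integral_comp_neg (f := Real.exp),
    integral_exp]
  simp

lemma integrableOn_rpow_exp {δ : ℝ} (hδ1 : δ < 1) (b : ℝ) :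
    IntegrableOn (fun t : ℝ => t ^ (-δ) * Real.exp (-t)) (Set.Ioc 0 b) := by
  rcases le_or_gt b 0 with hb | hb
  · rw [Set.Ioc_eq_empty (by exact fun h => absurd (h.trans_le hb) (lt_irrefl 0))]
    simp [IntegrableOn]
  have h1 : IntegrableOn (fun t : ℝ => t ^ (-δ)) (Set.Ioc 0 b) := by
    have := intervalIntegral.intervalIntegrable_rpow' (a := 0) (b := b) (r := -δ) (by linarith)
    rwa [intervalIntegrable_iff, uIoc_of_le hb.le] at this
  refine h1.mono' (((by measurability : Measurable fun t : ℝ => t ^ (-δ)).mul (Real.measurable_exp.comp measurable_neg)).aestronglyMeasurable) ?_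
  filter_upwards [ae_restrict_mem measurableSet_Ioc] with t ht
  rw [norm_mul, Real.norm_eq_abs, Real.norm_eq_abs, abs_of_nonneg (rpow_nonneg ht.1.le _),
    abs_of_nonneg (exp_nonneg _)]
  nth_rewrite 2 [← mul_one (t ^ (-δ))]
  exact mul_le_mul_of_nonneg_left (exp_le_one_iff.2 (by linarith [ht.1])) (rpow_nonneg ht.1.le _)

lemma lowerGamma_eq {δ : ℝ} (x : ℝ) :
    lowerGamma (1 - δ) x = ∫ t in Set.Ioc (0:ℝ) x, t ^ (-δ) * Real.exp (-t) := by
  unfold lowerGamma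
  norm_num

lemma lowerGamma_nonneg {δ : ℝ} (x : ℝ) : 0 ≤ lowerGamma (1 - δ) x := by
  rw [lowerGamma_eq]
  refine setIntegral_nonneg measurableSet_Ioc fun t ht => ?_
  exact mul_nonneg (rpow_nonneg ht.1.le _) (exp_nonneg _)

lemma lowerGamma_mono {δ : ℝ} (hδ1 : δ < 1) : Monotone (lowerGamma (1 - δ)) := by
  intro x y hxy
  rw [lowerGamma_eq, lowerGamma_eq]
  refine setIntegral_mono_set (integrableOn_rpow_exp hδ1 y) ?_ ?_
  · filter_upwards [ae_restrict_mem measurableSet_Ioc] with t ht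
    exact mul_nonneg (rpow_nonneg ht.1.le _) (exp_nonneg _)
  · exact HasSubset.Subset.eventuallyLE (Set.Ioc_subset_Ioc_right hxy)

lemma lowerGamma_le {δ : ℝ} (hδ1 : δ < 1) (hδ0 : 0 < δ) (x : ℝ) :
    lowerGamma (1 - δ) x ≤ ∫ t in Set.Ioi (0:ℝ), t ^ (-δ) * Real.exp (-t) := by
  rw [lowerGamma_eq]
  have hInt : IntegrableOn (fun t : ℝ => t ^ (-δ) * Real.exp (-t)) (Set.Ioi 0) := by
    have := Real.GammaIntegral_convergent (s := 1 - δ) (by linarith)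
    refine this.congr_fun (fun t ht => ?_) measurableSet_Ioi
    rw [mul_comm]
    norm_num
  refine setIntegral_mono_set hInt ?_ ?_
  · filter_upwards [ae_restrict_mem measurableSet_Ioi] with t ht
    exact mul_nonneg (rpow_nonneg (le_of_lt ht) _) (exp_nonneg _)
  · exact HasSubset.Subset.eventuallyLE Set.Ioc_subset_Ioi_self


lemma pointwise_key {α δ R c : ℝ} (hα : 2 < α) (hδ : δ = 2/α) (hR : 0 < R) (hc : 0 < c) :
    (∫⁻ l in Set.Ioi R, ENNReal.ofReal ((1 - Real.exp (-(c * l ^ (-α)))) * l))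
      = ENNReal.ofReal ((c ^ δ * lowerGamma (1 - δ) (c * R ^ (-α))
          - R ^ 2 * (1 - Real.exp (-(c * R ^ (-α))))) / 2)
    ∧ 0 ≤ (c ^ δ * lowerGamma (1 - δ) (c * R ^ (-α))
          - R ^ 2 * (1 - Real.exp (-(c * R ^ (-α))))) / 2 := by
  have hα0 : 0 < α := by linarith
  have hδ0 : 0 < δ := by rw [hδ]; positivity
  have hδ1 : δ < 1 := by rw [hδ, div_lt_one hα0]; linarith
  set b : ℝ := c * R ^ (-α) with hbdef
  have hb : 0 < b := mul_pos hc (rpow_pos_of_pos hR _)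
  have hαδ : α * δ = 2 := by rw [hδ]; field_simp
  have hRαδ : (R ^ α) ^ δ = R ^ 2 := by
    rw [← Real.rpow_mul hR.le, hαδ, show (2:ℝ) = ((2:ℕ):ℝ) by norm_num, rpow_natCast]
  set F : ℝ × ℝ → ℝ≥0∞ := fun p => ENNReal.ofReal (Real.exp (-p.2) * p.1) with hF
  set S : Set (ℝ × ℝ) := {p | R < p.1 ∧ (0 < p.2 ∧ p.2 ≤ c * p.1 ^ (-α))} with hS
  have hcm : Measurable fun p : ℝ × ℝ => c * p.1 ^ (-α) := by measurability
  have hSmeas : MeasurableSet S := by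
    rw [hS]
    simp only [Set.setOf_and]
    exact (measurableSet_lt measurable_const measurable_fst).inter
      ((measurableSet_lt measurable_const measurable_snd).inter
        (measurableSet_le measurable_snd hcm))
  have hFmeas : Measurable F := by
    apply ENNReal.measurable_ofReal.comp
    measurability
  -- membership characterization
  have hmem : ∀ l t : ℝ, ((l, t) ∈ S) ↔ ((0 < t ∧ t < b) ∧ (R < l ∧ l ≤ (c / t) ^ α⁻¹)) := by
    intro l t
    simp only [hS, Set.mem_setOf_eq]
    constructor
    · rintro ⟨hl, ht, hle⟩
      have hl0 : 0 < l := hR.trans hl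
      have hlα : (0:ℝ) < l ^ α := rpow_pos_of_pos hl0 _
      have hcl : c * l ^ (-α) = c / l ^ α := by
        rw [rpow_neg hl0.le, div_eq_mul_inv]
      have h2 : t * l ^ α ≤ c := by
        rw [hcl, le_div_iff₀ hlα] at hle; exact hle
      have h3 : l ^ α ≤ c / t := by
        rw [le_div_iff₀ ht]; linarith
      have h4 : l ≤ (c / t) ^ α⁻¹ := by
        rw [le_rpow_inv_iff_of_pos hl0.le (le_trans (rpow_nonneg hl0.le α) h3) hα0]
        exact h3
      have h5 : t < b := by
        have hlt : l ^ (-α) < R ^ (-α) := rpow_lt_rpow_of_neg hR hl (by linarith)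
        calc t ≤ c * l ^ (-α) := hle
          _ < c * R ^ (-α) := (mul_lt_mul_iff_right₀ hc).2 hlt
      exact ⟨⟨ht, h5⟩, hl, h4⟩
    · rintro ⟨⟨ht, _⟩, hl, hle⟩
      have hl0 : 0 < l := hR.trans hl
      have hlα : (0:ℝ) < l ^ α := rpow_pos_of_pos hl0 _
      refine ⟨hl, ht, ?_⟩
      have h3 : l ^ α ≤ c / t := by
        rw [← le_rpow_inv_iff_of_pos hl0.le (div_nonneg hc.le ht.le) hα0]; exact hle
      have h2 : l ^ α * t ≤ c := (le_div_iff₀ ht).1 h3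
      rw [rpow_neg hl0.le, div_eq_mul_inv] at *
      calc t = l ^ α * t * (l ^ α)⁻¹ := by field_simp
        _ ≤ c * (l ^ α)⁻¹ := by
            exact mul_le_mul_of_nonneg_right h2 (inv_nonneg.2 hlα.le)
  -- step 1
  have step1 : (∫⁻ l in Set.Ioi R, ENNReal.ofReal ((1 - Real.exp (-(c * l ^ (-α)))) * l))
      = ∫⁻ l, ∫⁻ t, S.indicator F (l, t) := by
    rw [← lintegral_indicator measurableSet_Ioi]
    apply lintegral_congr
    intro l
    by_cases hl : l ∈ Set.Ioi R
    · rw [Set.indicator_of_mem hl]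
      have hl' : R < l := hl
      have hl0 : 0 < l := hR.trans hl'
      have hu : 0 < c * l ^ (-α) := mul_pos hc (rpow_pos_of_pos hl0 _)
      have h1 : (1 - Real.exp (-(c * l ^ (-α)))) * l
          = ∫ t in Set.Ioc (0:ℝ) (c * l ^ (-α)), Real.exp (-t) * l := by
        rw [integral_mul_const, exp_Ioc_integral hu.le]
      have hint : IntegrableOn (fun t : ℝ => Real.exp (-t) * l)
          (Set.Ioc 0 (c * l ^ (-α))) := by
        apply Continuous.integrableOn_Ioc; fun_prop
      rw [h1, ofReal_integral_eq_lintegral_ofReal hint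
        (ae_of_all _ fun t => mul_nonneg (exp_nonneg _) hl0.le),
        ← lintegral_indicator measurableSet_Ioc]
      apply lintegral_congr
      intro t
      by_cases ht : t ∈ Set.Ioc 0 (c * l ^ (-α))
      · rw [Set.indicator_of_mem ht, Set.indicator_of_mem (by exact ⟨hl', ht.1, ht.2⟩)]
      · rw [Set.indicator_of_notMem ht, Set.indicator_of_notMem
          (fun h => ht ⟨h.2.1, h.2.2⟩)]
    · rw [Set.indicator_of_notMem hl]
      have : ∀ t, S.indicator F (l, t) = 0 := fun t =>
        Set.indicator_of_notMem (fun h => hl h.1) _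
      simp [this]
  -- step 2: swap
  have step2 : (∫⁻ l, ∫⁻ t, S.indicator F (l, t)) = ∫⁻ t, ∫⁻ l, S.indicator F (l, t) := by
    apply lintegral_lintegral_swap
    exact (hFmeas.indicator hSmeas).aemeasurable
  -- step 3: evaluate inner integral
  have step3 : ∀ t, (∫⁻ l, S.indicator F (l, t))
      = (Set.Ioo 0 b).indicator
          (fun t => ENNReal.ofReal (Real.exp (-t) * (((c/t) ^ α⁻¹) ^ 2 - R ^ 2) / 2)) t := by
    intro t
    by_cases ht : t ∈ Set.Ioo 0 b
    · rw [Set.indicator_of_mem ht]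
      obtain ⟨ht0, htb⟩ := ht
      set M := (c / t) ^ α⁻¹ with hM
      have hRM : R < M := by
        rw [hM, lt_rpow_inv_iff_of_pos hR.le (div_nonneg hc.le ht0.le) hα0, lt_div_iff₀ ht0]
        have htb' : t < c / R ^ α := by
          rw [hbdef, rpow_neg hR.le, ← div_eq_mul_inv] at htb; exact htb
        calc R ^ α * t < R ^ α * (c / R ^ α) :=
              (mul_lt_mul_iff_right₀ (rpow_pos_of_pos hR α)).2 htb'
          _ = c := by field_simp
      have heq : ∀ l, S.indicator F (l, t)
          = (Set.Ioc R M).indicator (fun l => ENNReal.ofReal (Real.exp (-t) * l)) l := by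
        intro l
        by_cases hl : l ∈ Set.Ioc R M
        · rw [Set.indicator_of_mem hl, Set.indicator_of_mem
            ((hmem l t).2 ⟨⟨ht0, htb⟩, hl.1, hl.2⟩)]
        · rw [Set.indicator_of_notMem hl, Set.indicator_of_notMem
            (fun h => hl ⟨((hmem l t).1 h).2.1, ((hmem l t).1 h).2.2⟩)]
      have hint2 : IntegrableOn (fun l : ℝ => Real.exp (-t) * l) (Set.Ioc R M) := by
        apply Continuous.integrableOn_Ioc; fun_prop
      have hnn2 : 0 ≤ᵐ[volume.restrict (Set.Ioc R M)] fun l : ℝ => Real.exp (-t) * l := by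
        filter_upwards [ae_restrict_mem measurableSet_Ioc] with l hl
        exact mul_nonneg (exp_nonneg _) (le_of_lt (hR.trans hl.1))
      rw [lintegral_congr heq, lintegral_indicator measurableSet_Ioc,
        ← ofReal_integral_eq_lintegral_ofReal hint2 hnn2]
      congr 1
      rw [integral_const_mul, ← intervalIntegral.integral_of_le hRM.le, integral_id]
      ring
    · rw [Set.indicator_of_notMem ht]
      have : ∀ l, S.indicator F (l, t) = 0 := by
        intro l
        apply Set.indicator_of_notMem
        intro h
        exact ht (Set.mem_Ioo.2 ⟨((hmem l t).1 h).1.1, ((hmem l t).1 h).1.2⟩)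
      simp [this]
  -- algebraic evaluation
  set ψ : ℝ → ℝ := fun t => c ^ δ / 2 * (t ^ (-δ) * Real.exp (-t)) - R ^ 2 / 2 * Real.exp (-t)
    with hψ
  have heval : ∀ t ∈ Set.Ioo (0:ℝ) b,
      Real.exp (-t) * (((c/t) ^ α⁻¹) ^ 2 - R ^ 2) / 2 = ψ t := by
    rintro t ⟨ht0, _⟩
    have h2 : ((c/t) ^ α⁻¹) ^ 2 = c ^ δ * t ^ (-δ) := by
      rw [← rpow_natCast ((c/t) ^ α⁻¹) 2, ← Real.rpow_mul (div_nonneg hc.le ht0.le)]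
      have hδ' : α⁻¹ * ((2:ℕ):ℝ) = δ := by push_cast; rw [hδ]; ring
      rw [hδ', div_rpow hc.le ht0.le, rpow_neg ht0.le, div_eq_mul_inv]
    rw [h2, hψ]; ring
  have hψnn : ∀ t ∈ Set.Ioo (0:ℝ) b, 0 ≤ ψ t := by
    rintro t ⟨ht0, htb⟩
    have hlt : b ^ (-δ) < t ^ (-δ) := rpow_lt_rpow_of_neg ht0 htb (by linarith)
    have hc2 : c ^ δ * b ^ (-δ) = R ^ 2 := by
      rw [rpow_neg hb.le, ← div_eq_mul_inv, ← div_rpow hc.le hb.le]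
      have hcb : c / b = R ^ α := by
        rw [hbdef, rpow_neg hR.le]
        field_simp
      rw [hcb, hRαδ]
    have h1 : R ^ 2 ≤ c ^ δ * t ^ (-δ) := by
      rw [← hc2]
      exact mul_le_mul_of_nonneg_left hlt.le (rpow_nonneg hc.le δ)
    have he := exp_nonneg (-t)
    rw [hψ]
    simp only
    nlinarith
  have hψint : IntegrableOn ψ (Set.Ioo 0 b) := by
    apply Integrable.sub
    · exact ((integrableOn_rpow_exp hδ1 b).mono_set Set.Ioo_subset_Ioc_self).const_mul _
    · exact (((Real.continuous_exp.comp continuous_neg).integrableOn_Ioc).mono_set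
        Set.Ioo_subset_Ioc_self).const_mul _
  have hψval : ∫ t in Set.Ioo (0:ℝ) b, ψ t
      = (c ^ δ * lowerGamma (1 - δ) b - R ^ 2 * (1 - Real.exp (-b))) / 2 := by
    have i1 : IntegrableOn (fun t : ℝ => c ^ δ / 2 * (t ^ (-δ) * Real.exp (-t)))
        (Set.Ioo 0 b) :=
      ((integrableOn_rpow_exp hδ1 b).mono_set Set.Ioo_subset_Ioc_self).const_mul _
    have i2 : IntegrableOn (fun t : ℝ => R ^ 2 / 2 * Real.exp (-t)) (Set.Ioo 0 b) :=
      (((Real.continuous_exp.comp continuous_neg).integrableOn_Ioc).mono_set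
        Set.Ioo_subset_Ioc_self).const_mul _
    rw [hψ]
    simp only
    rw [integral_sub i1 i2, integral_const_mul, integral_const_mul,
      ← integral_Ioc_eq_integral_Ioo, ← integral_Ioc_eq_integral_Ioo,
      ← lowerGamma_eq, exp_Ioc_integral hb.le]
    ring
  have hψposint : 0 ≤ ∫ t in Set.Ioo (0:ℝ) b, ψ t :=
    setIntegral_nonneg measurableSet_Ioo hψnn
  constructor
  · rw [step1, step2]
    calc (∫⁻ t, ∫⁻ l, S.indicator F (l, t))
        = ∫⁻ t in Set.Ioo 0 b,
            ENNReal.ofReal (Real.exp (-t) * (((c/t) ^ α⁻¹) ^ 2 - R ^ 2) / 2) := by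
          rw [lintegral_congr step3, lintegral_indicator measurableSet_Ioo]
      _ = ∫⁻ t in Set.Ioo 0 b, ENNReal.ofReal (ψ t) := by
          apply setLIntegral_congr_fun measurableSet_Ioo
          intro t ht
          simp only
          rw [heval t ht]
      _ = ENNReal.ofReal (∫ t in Set.Ioo (0:ℝ) b, ψ t) := by
          rw [ofReal_integral_eq_lintegral_ofReal hψint]
          · filter_upwards [ae_restrict_mem measurableSet_Ioo] with t ht
            exact hψnn t ht
      _ = ENNReal.ofReal ((c ^ δ * lowerGamma (1 - δ) b
            - R ^ 2 * (1 - Real.exp (-b))) / 2) := by rw [hψval]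
  · rw [← hψval]
    exact hψposint


lemma meas_aux1 (s α : ℝ) : Measurable fun p : ℝ × ℝ => Real.exp (-(s * p.2 * p.1 ^ (-α))) := by
  measurability

lemma meas_rpow (δ : ℝ) : Measurable fun x : ℝ => x ^ δ := by
  measurability

/-- Exclusion-zone interference integral (Appendix III): for a probability measure ν on [0,∞),
`∫_R^∞ (1 − ∫ e^(−s h l^(−α)) dν(h)) l dl
  = (R²/2) (∫ (zh)^δ γ(1−δ, zh) dν(h) − (1 − ∫ e^(−zh) dν(h)))` with `z = s R^(−α)`. -/
theorem exclusion_zone_integral (ν : Measure ℝ) [IsProbabilityMeasure ν]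
    (hsupp : ν (Set.Iio 0) = 0)
    (α : ℝ) (hα : 2 < α) (δ : ℝ) (hδ : δ = 2 / α)
    (hmom : Integrable (fun h : ℝ => h ^ δ) ν)
    (R : ℝ) (hR : 0 < R) (s : ℝ) (hs : 0 < s) (z : ℝ) (hz : z = s * R ^ (-α)) :
    (∫ l in Set.Ioi R, (1 - ∫ h, Real.exp (-(s * h * l ^ (-α))) ∂ν) * l)
      = R ^ 2 / 2 *
        ((∫ h, (z * h) ^ δ * lowerGamma (1 - δ) (z * h) ∂ν)
          - (1 - ∫ h, Real.exp (-(z * h)) ∂ν)) := by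
  have hα0 : 0 < α := by linarith
  have hδ0 : 0 < δ := by rw [hδ]; positivity
  have hδ1 : δ < 1 := by rw [hδ, div_lt_one hα0]; linarith
  have hz0 : 0 < z := by rw [hz]; positivity
  have hαδ : α * δ = 2 := by rw [hδ]; field_simp
  have hRαδ : (R ^ α) ^ δ = R ^ 2 := by
    rw [← Real.rpow_mul hR.le, hαδ, show (2:ℝ) = ((2:ℕ):ℝ) by norm_num, rpow_natCast]
  have hae : ∀ᵐ h ∂ν, 0 ≤ h := by
    rw [ae_iff, show {h : ℝ | ¬ 0 ≤ h} = Set.Iio 0 by ext h; simp [not_le]]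
    exact hsupp
  have hsz : s = z * R ^ α := by
    rw [hz, mul_assoc, ← Real.rpow_add hR, neg_add_cancel, rpow_zero, mul_one]
  -- inner exp integrand and its properties
  have hinte : ∀ l : ℝ, 0 < l → Integrable (fun h => Real.exp (-(s * h * l ^ (-α)))) ν := by
    intro l hl0
    refine (integrable_const (1:ℝ)).mono' ((by fun_prop :
      Continuous fun h : ℝ => Real.exp (-(s * h * l ^ (-α)))).measurable.aestronglyMeasurable) ?_
    filter_upwards [hae] with h hh
    rw [Real.norm_eq_abs, abs_of_nonneg (exp_nonneg _)]
    apply exp_le_one_iff.2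
    simp only [neg_nonpos]
    exact mul_nonneg (mul_nonneg hs.le hh) (rpow_pos_of_pos hl0 _).le
  have hIle1 : ∀ l : ℝ, 0 < l → (∫ h, Real.exp (-(s * h * l ^ (-α))) ∂ν) ≤ 1 := by
    intro l hl0
    calc (∫ h, Real.exp (-(s * h * l ^ (-α))) ∂ν) ≤ ∫ _, (1:ℝ) ∂ν := by
          refine integral_mono_ae (hinte l hl0) (integrable_const 1) ?_
          filter_upwards [hae] with h hh
          apply exp_le_one_iff.2
          simp only [neg_nonpos]
          exact mul_nonneg (mul_nonneg hs.le hh) (rpow_pos_of_pos hl0 _).le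
      _ = 1 := by simp
  -- φ
  set φ : ℝ → ℝ := fun h =>
    R ^ 2 / 2 * ((z * h) ^ δ * lowerGamma (1 - δ) (z * h) - (1 - Real.exp (-(z * h))))
    with hφdef
  have hconv : ∀ h : ℝ, 0 < h →
      ((s * h) ^ δ * lowerGamma (1 - δ) (s * h * R ^ (-α))
        - R ^ 2 * (1 - Real.exp (-(s * h * R ^ (-α))))) / 2 = φ h := by
    intro h hh
    have h1 : s * h * R ^ (-α) = z * h := by rw [hz]; ring
    have h2 : (s * h) ^ δ = (z * h) ^ δ * R ^ 2 := by
      rw [show s * h = z * h * R ^ α by rw [hsz]; ring,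
        Real.mul_rpow (mul_nonneg hz0.le hh.le) (rpow_nonneg hR.le α), hRαδ]
    rw [h1, h2, hφdef]
    ring
  -- pointwise evaluation, a.e. in h
  have hkey : ∀ h : ℝ, 0 ≤ h →
      (∫⁻ l in Set.Ioi R, ENNReal.ofReal ((1 - Real.exp (-(s * h * l ^ (-α)))) * l))
        = ENNReal.ofReal (φ h) ∧ 0 ≤ φ h := by
    intro h hh
    rcases eq_or_lt_of_le hh with h0 | h0
    · constructor
      · rw [← h0]
        simp [hφdef, Real.zero_rpow hδ0.ne']
      · rw [← h0]
        simp [hφdef, Real.zero_rpow hδ0.ne']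
    · have key := pointwise_key hα hδ hR (mul_pos hs h0)
      exact ⟨by rw [key.1, hconv h h0], (hconv h h0) ▸ key.2⟩
  have hφnn : 0 ≤ᵐ[ν] φ := by
    filter_upwards [hae] with h hh
    exact (hkey h hh).2
  -- integrability of φ and its pieces
  have hγmeas : Measurable fun h : ℝ => lowerGamma (1 - δ) (z * h) :=
    (lowerGamma_mono hδ1).measurable.comp (measurable_id.const_mul z)
  have hg1meas : Measurable fun h : ℝ => (z * h) ^ δ * lowerGamma (1 - δ) (z * h) := by
    exact ((meas_rpow δ).comp (measurable_id.const_mul z)).mul hγmeas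
  have Hg1 : Integrable (fun h : ℝ => (z * h) ^ δ * lowerGamma (1 - δ) (z * h)) ν := by
    set C : ℝ := ∫ t in Set.Ioi (0:ℝ), t ^ (-δ) * Real.exp (-t) with hC
    have hC0 : 0 ≤ C := setIntegral_nonneg measurableSet_Ioi fun t ht =>
      mul_nonneg (rpow_nonneg (le_of_lt ht) _) (exp_nonneg _)
    refine (hmom.const_mul (z ^ δ * C)).mono' hg1meas.aestronglyMeasurable ?_
    filter_upwards [hae] with h hh
    rw [Real.norm_eq_abs, abs_of_nonneg (mul_nonneg (rpow_nonneg (mul_nonneg hz0.le hh) _)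
      (lowerGamma_nonneg _))]
    rw [Real.mul_rpow hz0.le hh]
    calc z ^ δ * h ^ δ * lowerGamma (1 - δ) (z * h) ≤ z ^ δ * h ^ δ * C := by
          exact mul_le_mul_of_nonneg_left (lowerGamma_le hδ1 hδ0 _)
            (mul_nonneg (rpow_nonneg hz0.le _) (rpow_nonneg hh _))
      _ = z ^ δ * C * h ^ δ := by ring
  have Hexp : Integrable (fun h : ℝ => Real.exp (-(z * h))) ν := by
    refine (integrable_const (1:ℝ)).mono' ((by fun_prop :
      Continuous fun h : ℝ => Real.exp (-(z * h))).measurable.aestronglyMeasurable) ?_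
    filter_upwards [hae] with h hh
    rw [Real.norm_eq_abs, abs_of_nonneg (exp_nonneg _)]
    apply exp_le_one_iff.2
    simp only [neg_nonpos]
    exact mul_nonneg hz0.le hh
  have Hg2 : Integrable (fun h : ℝ => 1 - Real.exp (-(z * h))) ν :=
    (integrable_const 1).sub Hexp
  have hφint : Integrable φ ν := by
    rw [hφdef]
    exact (Hg1.sub Hg2).const_mul _
  -- the main ENNReal chain
  have hKmeas : Measurable fun p : ℝ × ℝ =>
      ENNReal.ofReal ((1 - Real.exp (-(s * p.2 * p.1 ^ (-α)))) * p.1) := by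
    exact ENNReal.measurable_ofReal.comp
      (((measurable_const.sub (meas_aux1 s α)).mul measurable_fst))
  have hImeas : StronglyMeasurable fun l : ℝ => ∫ h, Real.exp (-(s * h * l ^ (-α))) ∂ν := by
    apply MeasureTheory.StronglyMeasurable.integral_prod_right'
      (f := fun p : ℝ × ℝ => Real.exp (-(s * p.2 * p.1 ^ (-α))))
    exact (meas_aux1 s α).stronglyMeasurable
  have hGnn : 0 ≤ᵐ[volume.restrict (Set.Ioi R)]
      fun l => (1 - ∫ h, Real.exp (-(s * h * l ^ (-α))) ∂ν) * l := by
    filter_upwards [ae_restrict_mem measurableSet_Ioi] with l hl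
    have hl0 : 0 < l := hR.trans hl
    have := hIle1 l hl0
    exact mul_nonneg (by linarith) hl0.le
  have hGmeas : AEStronglyMeasurable
      (fun l => (1 - ∫ h, Real.exp (-(s * h * l ^ (-α))) ∂ν) * l)
      (volume.restrict (Set.Ioi R)) :=
    ((stronglyMeasurable_const.sub hImeas).mul stronglyMeasurable_id).aestronglyMeasurable
  rw [integral_eq_lintegral_of_nonneg_ae hGnn hGmeas]
  have hchain : (∫⁻ l in Set.Ioi R,
      ENNReal.ofReal ((1 - ∫ h, Real.exp (-(s * h * l ^ (-α))) ∂ν) * l))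
      = ENNReal.ofReal (∫ h, φ h ∂ν) := by
    have stepA : ∀ l ∈ Set.Ioi R,
        ENNReal.ofReal ((1 - ∫ h, Real.exp (-(s * h * l ^ (-α))) ∂ν) * l)
          = ∫⁻ h, ENNReal.ofReal ((1 - Real.exp (-(s * h * l ^ (-α)))) * l) ∂ν := by
      intro l hl
      have hl0 : 0 < l := hR.trans hl
      have hint : Integrable (fun h => (1 - Real.exp (-(s * h * l ^ (-α)))) * l) ν :=
        ((integrable_const 1).sub (hinte l hl0)).mul_const l
      have heq : (1 - ∫ h, Real.exp (-(s * h * l ^ (-α))) ∂ν) * l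
          = ∫ h, (1 - Real.exp (-(s * h * l ^ (-α)))) * l ∂ν := by
        rw [integral_mul_const, integral_sub (integrable_const 1) (hinte l hl0)]
        simp
      rw [heq, ofReal_integral_eq_lintegral_ofReal hint]
      filter_upwards [hae] with h hh
      have : Real.exp (-(s * h * l ^ (-α))) ≤ 1 := by
        apply exp_le_one_iff.2
        simp only [neg_nonpos]
        exact mul_nonneg (mul_nonneg hs.le hh) (rpow_pos_of_pos hl0 _).le
      exact mul_nonneg (by linarith) hl0.le
    rw [setLIntegral_congr_fun measurableSet_Ioi stepA]
    rw [lintegral_lintegral_swap hKmeas.aemeasurable]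
    have stepC : (∫⁻ h, (∫⁻ l in Set.Ioi R,
        ENNReal.ofReal ((1 - Real.exp (-(s * h * l ^ (-α)))) * l)) ∂ν)
        = ∫⁻ h, ENNReal.ofReal (φ h) ∂ν := by
      apply lintegral_congr_ae
      filter_upwards [hae] with h hh
      exact (hkey h hh).1
    rw [stepC, ← ofReal_integral_eq_lintegral_ofReal hφint hφnn]
  rw [hchain, ENNReal.toReal_ofReal (integral_nonneg_of_ae hφnn)]
  rw [hφdef]
  simp only
  rw [integral_const_mul, integral_sub Hg1 Hg2,
    integral_sub (integrable_const 1) Hexp]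
  simp
end

section
/- (Appendix IV, κ-μ fading as the m → ∞ limit.) Let κ > 0, μ > 0, h̄ > 0 and s > 0 be fixed, set θ₁ = h̄/(μ(1+κ)), and for each real m > 0 set θ₂(m) = (μκ+m)h̄/(μ(1+κ)m). Then, as m → ∞ along the positive reals, (1 + θ₁ s)^{m−μ} (1 + θ₂(m) s)^{−m} converges to (1 + θ₁ s)^{−μ} · exp( −μκ θ₁ s/(1 + θ₁ s) ). -/
open Real MeasureTheory Set Filter

/-- Appendix IV: κ-μ fading as the `m → ∞` limit of the κ-μ shadowed Laplace transform:
`(1 + θ₁s)^(m−μ) (1 + θ₂(m)s)^(−m) → (1 + θ₁s)^(−μ) exp(−μκθ₁s/(1 + θ₁s))`. -/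
theorem kmu_shadowed_limit (κ μ hbar s : ℝ) (hκ : 0 < κ) (hμ : 0 < μ)
    (hhbar : 0 < hbar) (hs : 0 < s)
    (θ1 : ℝ) (hθ1 : θ1 = hbar / (μ * (1 + κ))) :
    Filter.Tendsto
      (fun m : ℝ =>
        (1 + θ1 * s) ^ (m - μ) * (1 + ((μ * κ + m) * hbar / (μ * (1 + κ) * m)) * s) ^ (-m))
      Filter.atTop
      (nhds ((1 + θ1 * s) ^ (-μ) * Real.exp (-(μ * κ * θ1 * s / (1 + θ1 * s))))) := by
  have hκ1 : 0 < 1 + κ := by linarith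
  have hθ1pos : 0 < θ1 := by rw [hθ1]; positivity
  set A := 1 + θ1 * s with hA
  have hApos : 0 < A := by positivity
  set c := μ * κ * θ1 * s / A with hc
  have hcpos : 0 < c := by positivity
  have hexp : Real.exp (-c) = (Real.exp c)⁻¹ := Real.exp_neg c
  have h1 := tendsto_one_add_div_rpow_exp c
  have h2 : Filter.Tendsto (fun m : ℝ => A ^ (-μ) * ((1 + c / m) ^ m)⁻¹)
      Filter.atTop (nhds (A ^ (-μ) * (Real.exp c)⁻¹)) :=
    tendsto_const_nhds.mul (h1.inv₀ (Real.exp_ne_zero c))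
  rw [← hexp] at h2
  refine h2.congr' ?_
  filter_upwards [eventually_gt_atTop (0 : ℝ)] with m hm
  have hmne : m ≠ 0 := ne_of_gt hm
  have hB : 0 < 1 + c / m := by positivity
  have hθ2 : 1 + ((μ * κ + m) * hbar / (μ * (1 + κ) * m)) * s = A * (1 + c / m) := by
    rw [hc, hA, hθ1]
    have hAne : (0:ℝ) < 1 + hbar / (μ * (1 + κ)) * s := by positivity
    field_simp
    ring
  rw [hθ2, Real.mul_rpow hApos.le hB.le, Real.rpow_neg hB.le]
  have hAm : A ^ (m - μ) * A ^ (-m) = A ^ (-μ) := by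
    rw [← Real.rpow_add hApos]; ring_nf
  calc A ^ (-μ) * ((1 + c / m) ^ m)⁻¹
      = A ^ (m - μ) * A ^ (-m) * ((1 + c / m) ^ m)⁻¹ := by rw [hAm]
    _ = A ^ (m - μ) * (A ^ (-m) * ((1 + c / m) ^ m)⁻¹) := by ring
end

section
/- (Derivative identity for the rate function, eq. (46).) For every integer n ≥ 1 and every z > 0, (1/(n−1)!) · (dⁿ/dzⁿ)[ z^{n−1} ln(1+z) ] = (1/z) · ( 1 − (1+z)^{−n} ). -/
open Real MeasureTheory Set Filter Topology

private lemma iterDerivWithin_eq_of_isOpen {s : Set ℝ} (hs : IsOpen s)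
    {x : ℝ} (hx : x ∈ s) (n : ℕ) (f : ℝ → ℝ) :
    iteratedDerivWithin n f s x = iteratedDeriv n f x := by
  rw [iteratedDerivWithin_eq_iteratedFDerivWithin, iteratedDeriv_eq_iteratedFDeriv,
    iteratedFDerivWithin_of_isOpen n hs hx]

private lemma prod_neg_one_sub (k : ℕ) :
    (∏ i ∈ Finset.range k, (-1 - i : ℝ)) = (-1) ^ k * k.factorial := by
  induction k with
  | zero => simp
  | succ k ih =>
    rw [Finset.prod_range_succ, ih, Nat.factorial_succ]
    push_cast
    ring

private lemma iterDeriv_inv_shift (k : ℕ) (z : ℝ) :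
    iteratedDeriv k (fun t : ℝ => (1 + t)⁻¹) z
      = (-1) ^ k * k.factorial * (1 + z) ^ (-1 - (k : ℤ)) := by
  have h : iteratedDeriv k (fun t : ℝ => (1 + t)⁻¹) z
      = iteratedDeriv k (Inv.inv : ℝ → ℝ) (1 + z) :=
    congrFun (iteratedDeriv_comp_const_add k (Inv.inv : ℝ → ℝ) 1) z
  rw [h, iteratedDeriv_eq_iterate, iter_deriv_inv]

private lemma iterDeriv_monomial_zero {k m : ℕ} (hk : k < m) (z : ℝ) :
    iteratedDeriv m (fun t : ℝ => t ^ k) z = 0 := by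
  rw [iteratedDeriv_eq_iterate, iter_deriv_pow]
  exact mul_eq_zero_of_left
    (Finset.prod_eq_zero (Finset.mem_range.2 hk) (by simp)) _

private lemma iterDerivWithin_sum {s : Set ℝ} (hs : UniqueDiffOn ℝ s) {x : ℝ} (hx : x ∈ s)
    (n : ℕ) {ι : Type*} (u : Finset ι) (F : ι → ℝ → ℝ)
    (hF : ∀ i ∈ u, ContDiffOn ℝ n (F i) s) :
    iteratedDerivWithin n (fun t => ∑ i ∈ u, F i t) s x
      = ∑ i ∈ u, iteratedDerivWithin n (F i) s x := by
  classical
  induction u using Finset.induction_on with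
  | empty =>
    simp only [Finset.sum_empty]
    have : (fun _ : ℝ => (0:ℝ)) = ((fun _ => 0) : ℝ → ℝ) := rfl
    simpa using iteratedDerivWithin_const_smul (R := ℝ) hx hs (0:ℝ) contDiffWithinAt_const
      (f := fun _ : ℝ => (1:ℝ))
  | @insert a u' hnot ih =>
    have hsum : (fun t => ∑ i ∈ insert a u', F i t)
        = (F a) + (fun t => ∑ i ∈ u', F i t) := by
      funext t
      simp [Finset.sum_insert hnot]
    have h1 : ContDiffOn ℝ n (F a) s := hF a (Finset.mem_insert_self a u')
    have h2 : ContDiffOn ℝ n (fun t => ∑ i ∈ u', F i t) s := by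
      apply ContDiffOn.sum
      intro i hi
      exact hF i (Finset.mem_insert_of_mem hi)
    rw [hsum, iteratedDerivWithin_add hx hs (h1 x hx) (h2 x hx),
      ih (fun i hi => hF i (Finset.mem_insert_of_mem hi))]
    simp [Finset.sum_insert hnot]

private lemma main_identity (m : ℕ) : ∀ z : ℝ, -1 < z →
    iteratedDeriv (m + 1) (fun t => t ^ m * Real.log (1 + t)) z
      = (m.factorial : ℝ) * ∑ k ∈ Finset.range (m + 1), ((1 + z)⁻¹) ^ (k + 1) := by
  induction m with
  | zero =>
    intro z hz
    have h1 : (fun t : ℝ => t ^ 0 * Real.log (1 + t))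
        = fun t => Real.log (1 + t) := by funext t; simp
    rw [h1, iteratedDeriv_one, deriv_comp_const_add Real.log 1 z, Real.deriv_log]
    simp
  | succ m ih =>
    intro z hz
    have hso : IsOpen (Ioi (-1 : ℝ)) := isOpen_Ioi
    have hsu : UniqueDiffOn ℝ (Ioi (-1 : ℝ)) := hso.uniqueDiffOn
    have hzs : z ∈ Ioi (-1 : ℝ) := hz
    have hne : ∀ t : ℝ, t ∈ Ioi (-1 : ℝ) → (1 : ℝ) + t ≠ 0 := fun t ht => by
      simp only [mem_Ioi] at ht; intro h; linarith
    -- smoothness facts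
    have hlog : ContDiffOn ℝ ((m + 1 : ℕ) : ℕ∞) (fun t : ℝ => Real.log (1 + t))
        (Ioi (-1 : ℝ)) :=
      ContDiffOn.log (contDiffOn_const.add contDiffOn_id) hne
    have hinv : ContDiffOn ℝ ((m + 1 : ℕ) : ℕ∞) (fun t : ℝ => (1 + t)⁻¹) (Ioi (-1 : ℝ)) :=
      ContDiffOn.inv (contDiffOn_const.add contDiffOn_id) hne
    have hpow : ∀ k : ℕ, ContDiffOn ℝ ((m + 1 : ℕ) : ℕ∞) (fun t : ℝ => t ^ k)
        (Ioi (-1 : ℝ)) :=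
      fun k => (contDiff_id.pow k).contDiffOn
    have hmonc : ∀ k : ℕ, ContDiffOn ℝ ((m + 1 : ℕ) : ℕ∞) (fun t : ℝ => (-t) ^ k)
        (Ioi (-1 : ℝ)) :=
      fun k => (contDiff_id.neg.pow k).contDiffOn
    have hsumc : ContDiffOn ℝ ((m + 1 : ℕ) : ℕ∞)
        (fun t : ℝ => ∑ k ∈ Finset.range (m + 1), (-t) ^ k) (Ioi (-1 : ℝ)) :=
      ContDiffOn.sum fun k _ => hmonc k
    -- step 1 : move one derivative inside
    rw [iteratedDeriv_succ']
    -- step 2 : identify the first derivative near z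
    have hder : deriv (fun t : ℝ => t ^ (m + 1) * Real.log (1 + t)) =ᶠ[𝓝 z]
        (fun t : ℝ => ((m : ℝ) + 1) * (t ^ m * Real.log (1 + t))
          + t ^ (m + 1) * (1 + t)⁻¹) := by
      filter_upwards [hso.mem_nhds hzs] with t ht
      have h1t : (1 : ℝ) + t ≠ 0 := hne t ht
      have hlog' : HasDerivAt (fun t : ℝ => Real.log (1 + t)) ((1 + t)⁻¹ * 1) t := by
        have h0 : HasDerivAt (fun t : ℝ => 1 + t) 1 t := by
          simpa using (hasDerivAt_id t).const_add (1 : ℝ)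
        exact (Real.hasDerivAt_log h1t).comp t h0
      have hd : HasDerivAt (fun t : ℝ => t ^ (m + 1) * Real.log (1 + t))
          ((((m + 1 : ℕ) : ℝ) * t ^ m) * Real.log (1 + t)
            + t ^ (m + 1) * ((1 + t)⁻¹ * 1)) t := by
        simpa using (hasDerivAt_pow (m + 1) t).fun_mul hlog'
      rw [hd.deriv]
      push_cast
      ring
    rw [hder.iteratedDeriv_eq (m + 1)]
    -- step 3 : work within the open set
    rw [← iterDerivWithin_eq_of_isOpen hso hzs]
    have hsplit : (fun t : ℝ => ((m : ℝ) + 1) * (t ^ m * Real.log (1 + t))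
          + t ^ (m + 1) * (1 + t)⁻¹)
        = (fun t : ℝ => ((m : ℝ) + 1) * (t ^ m * Real.log (1 + t)))
          + (fun t : ℝ => t ^ (m + 1) * (1 + t)⁻¹) := rfl
    have hF1c : ContDiffOn ℝ ((m + 1 : ℕ) : ℕ∞)
        (fun t : ℝ => ((m : ℝ) + 1) * (t ^ m * Real.log (1 + t))) (Ioi (-1 : ℝ)) :=
      contDiffOn_const.mul ((hpow m).mul hlog)
    have hF2c : ContDiffOn ℝ ((m + 1 : ℕ) : ℕ∞)
        (fun t : ℝ => t ^ (m + 1) * (1 + t)⁻¹) (Ioi (-1 : ℝ)) :=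
      (hpow (m + 1)).mul hinv
    rw [hsplit, iteratedDerivWithin_add hzs hsu (hF1c z hzs) (hF2c z hzs)]
    -- first summand, via the induction hypothesis
    have hbase : ContDiffOn ℝ ((m + 1 : ℕ) : ℕ∞)
        (fun t : ℝ => t ^ m * Real.log (1 + t)) (Ioi (-1 : ℝ)) :=
      (hpow m).mul hlog
    rw [iteratedDerivWithin_const_mul hzs hsu _ (hbase z hzs),
      iterDerivWithin_eq_of_isOpen hso hzs, ih z hz]
    -- second summand : partial fractions
    have hEq : Set.EqOn (fun t : ℝ => t ^ (m + 1) * (1 + t)⁻¹)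
        (fun t : ℝ => (-1 : ℝ) ^ m * (∑ k ∈ Finset.range (m + 1), (-t) ^ k)
          + (-1 : ℝ) ^ (m + 1) * (1 + t)⁻¹) (Ioi (-1 : ℝ)) := by
      intro t ht
      have h1t : (1 : ℝ) + t ≠ 0 := hne t ht
      have hnt : (-t : ℝ) ≠ 1 := fun h => h1t (by linarith)
      have h2 : (-t : ℝ) - 1 ≠ 0 := fun h => h1t (by linarith)
      simp only
      rw [geom_sum_eq hnt]
      rw [neg_pow t (m + 1)]
      rcases Nat.even_or_odd m with hm | hm
      · rw [hm.neg_one_pow, hm.add_one.neg_one_pow]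
        field_simp
        ring
      · rw [hm.neg_one_pow, hm.add_one.neg_one_pow]
        field_simp
        ring
    rw [iteratedDerivWithin_congr hEq hzs]
    have hPc : ContDiffOn ℝ ((m + 1 : ℕ) : ℕ∞)
        (fun t : ℝ => (-1 : ℝ) ^ m * (∑ k ∈ Finset.range (m + 1), (-t) ^ k))
        (Ioi (-1 : ℝ)) := by
      exact contDiffOn_const.mul hsumc
    have hCc : ContDiffOn ℝ ((m + 1 : ℕ) : ℕ∞)
        (fun t : ℝ => (-1 : ℝ) ^ (m + 1) * (1 + t)⁻¹) (Ioi (-1 : ℝ)) :=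
      contDiffOn_const.mul hinv
    have hsplit2 : (fun t : ℝ => (-1 : ℝ) ^ m * (∑ k ∈ Finset.range (m + 1), (-t) ^ k)
          + (-1 : ℝ) ^ (m + 1) * (1 + t)⁻¹)
        = (fun t : ℝ => (-1 : ℝ) ^ m * (∑ k ∈ Finset.range (m + 1), (-t) ^ k))
          + (fun t : ℝ => (-1 : ℝ) ^ (m + 1) * (1 + t)⁻¹) := rfl
    rw [hsplit2, iteratedDerivWithin_add hzs hsu (hPc z hzs) (hCc z hzs)]
    -- the polynomial part has vanishing (m+1)-st derivative
    have hpoly : iteratedDerivWithin (m + 1)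
        (fun t : ℝ => (-1 : ℝ) ^ m * (∑ k ∈ Finset.range (m + 1), (-t) ^ k))
        (Ioi (-1 : ℝ)) z = 0 := by
      rw [iteratedDerivWithin_const_mul hzs hsu _ (hsumc z hzs)]
      rw [iterDerivWithin_sum hsu hzs (m + 1) _ _ (fun k _ => hmonc k)]
      have : ∀ k ∈ Finset.range (m + 1),
          iteratedDerivWithin (m + 1) (fun t : ℝ => (-t) ^ k) (Ioi (-1 : ℝ)) z = 0 := by
        intro k hk
        have hk' : k < m + 1 := Finset.mem_range.1 hk
        have hrw : (fun t : ℝ => (-t) ^ k) = fun t : ℝ => (-1 : ℝ) ^ k * t ^ k := by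
          funext t; rw [neg_pow]
        rw [hrw, iteratedDerivWithin_const_mul hzs hsu _ (hpow k z hzs),
          iterDerivWithin_eq_of_isOpen hso hzs, iterDeriv_monomial_zero hk']
        ring
      rw [Finset.sum_eq_zero this]
      ring
    rw [hpoly]
    -- the inverse part
    rw [iteratedDerivWithin_const_mul hzs hsu _ (hinv z hzs),
      iterDerivWithin_eq_of_isOpen hso hzs, iterDeriv_inv_shift]
    -- now pure algebra
    have hw : (1 : ℝ) + z ≠ 0 := hne z hzs
    have hzp : (1 + z) ^ (-1 - ((m + 1 : ℕ) : ℤ)) = ((1 + z)⁻¹) ^ (m + 2) := by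
      rw [show (-1 - ((m + 1 : ℕ) : ℤ)) = -((m + 2 : ℕ) : ℤ) by push_cast; ring,
        zpow_neg, zpow_natCast, inv_pow]
    rw [hzp]
    have hneg : ((-1 : ℝ)) ^ (m + 1) * ((-1 : ℝ)) ^ (m + 1) = 1 := by
      rw [← pow_add, ← two_mul, pow_mul]
      norm_num
    have hcollect : (-1 : ℝ) ^ (m + 1) * ((-1 : ℝ) ^ (m + 1) * ((m + 1).factorial : ℝ)
          * ((1 + z)⁻¹) ^ (m + 2))
        = ((m + 1).factorial : ℝ) * ((1 + z)⁻¹) ^ (m + 2) := by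
      rw [← mul_assoc, ← mul_assoc, hneg, one_mul]
    rw [zero_add, hcollect]
    conv_rhs => rw [Finset.sum_range_succ]
    rw [Nat.factorial_succ]
    push_cast
    ring

/-- Derivative identity for the rate function (eq. (46)):
`(1/(n−1)!) dⁿ/dzⁿ [z^(n−1) ln(1+z)] = (1/z)(1 − (1+z)^(−n))` for `z > 0`. -/
theorem rate_derivative_identity (n : ℕ) (hn : 1 ≤ n) (z : ℝ) (hz : 0 < z) :
    (1 / (n - 1).factorial : ℝ) *
        iteratedDeriv n (fun t => t ^ (n - 1) * Real.log (1 + t)) z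
      = 1 / z * (1 - ((1 + z) ^ n)⁻¹) := by
  obtain ⟨m, rfl⟩ : ∃ m, n = m + 1 := ⟨n - 1, by omega⟩
  have hm : (m + 1) - 1 = m := by omega
  rw [hm]
  have hz1 : (-1 : ℝ) < z := by linarith
  rw [main_identity m z hz1]
  have hw : (1 : ℝ) + z ≠ 0 := by linarith
  have hzne : z ≠ 0 := ne_of_gt hz
  have hrne : (1 + z)⁻¹ ≠ 1 := by
    intro h
    have : (1 : ℝ) + z = 1 := by
      field_simp at h; linarith
    linarith
  have hgeom : ∑ k ∈ Finset.range (m + 1), ((1 + z)⁻¹) ^ k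
      = (((1 + z)⁻¹) ^ (m + 1) - 1) / ((1 + z)⁻¹ - 1) := geom_sum_eq hrne (m + 1)
  have hsum : ∑ k ∈ Finset.range (m + 1), ((1 + z)⁻¹) ^ (k + 1)
      = (1 + z)⁻¹ * ∑ k ∈ Finset.range (m + 1), ((1 + z)⁻¹) ^ k := by
    rw [Finset.mul_sum]
    exact Finset.sum_congr rfl fun k _ => by ring
  have hfac : ((m.factorial : ℝ)) ≠ 0 := Nat.cast_ne_zero.2 m.factorial_ne_zero
  rw [hsum, hgeom]
  have hwp : ((1 : ℝ) + z) ^ (m + 1) ≠ 0 := pow_ne_zero _ hw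
  have hd : (1 + z)⁻¹ - 1 = -z * (1 + z)⁻¹ := by field_simp; ring
  rw [hd, inv_pow]
  generalize ((1 : ℝ) + z) ^ (m + 1) = P at hwp ⊢
  field_simp
  ring
end
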